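/- Fix an even integer κ ≥ 4 and an odd integer n ≥ 1. Let E > 0 and let X₀, …, X_{n+1} be real numbers satisfying: T_κ(X_q) = T_κ(X_{n−q}) for q = 0, 1, …, (n−1)/2; X_{1+q}·X_{n−q} = E for q = −1, 0, …, (n−1)/2; X_q ∈ (−1,1)∖{0} and U_{κ−1}(X_q) ≠ 0 for q = 0, 1, …, (n−1)/2; and X_{n+1} ∈ {cos(lπ/κ) : 0 ≤ l ≤ κ}∖{0}. Then for every j ∈ ℕ*: g_{jκ}^E(X_{(n+1)/2}) = Σ_{q=0}^{(n−1)/2} ω_q · g_{jκ}^E(X_q), where ω_q = 2·(−1)^{(n−1)/2−q} · (∏_{p=q}^{(n−1)/2} X_p)/(∏_{p=(n+1)/2}^{n−q} X_p) · (∏_{p=(n+1)/2}^{n−q} (1−X_p²)·U_{κ−1}(X_p))/(∏_{p=q}^{(n−1)/2} (1−X_p²)·U_{κ−1}(X_p)); in particular the coefficients ω_q do not depend on j. -/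

import Mathlib

open Real

/-- Chebyshev polynomial of the first kind, as a real function. -/
noncomputable def chebT (n : ℕ) (x : ℝ) : ℝ := (Polynomial.Chebyshev.T ℝ n).eval x

/-- Chebyshev polynomial of the second kind, as a real function. -/
noncomputable def chebU (n : ℕ) (x : ℝ) : ℝ := (Polynomial.Chebyshev.U ℝ n).eval x

/-- The function `g_{jκ}^E(x) = (E/x)(1-x²)U_{jκ-1}(x) + x(1-(E/x)²)U_{jκ-1}(E/x)`. -/
noncomputable def g (j κ : ℕ) (E x : ℝ) : ℝ :=
  (E / x) * (1 - x ^ 2) * chebU (j * κ - 1) x + x * (1 - (E / x) ^ 2) * chebU (j * κ - 1) (E / x)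

/-- The coefficients `ω_q` of Proposition `prop1_intro` (odd case). -/
noncomputable def omegaOdd (κ n : ℕ) (X : ℕ → ℝ) (q : ℕ) : ℝ :=
  2 * (-1 : ℝ) ^ ((n - 1) / 2 - q)
    * ((∏ p ∈ Finset.Icc q ((n - 1) / 2), X p)
        / (∏ p ∈ Finset.Icc ((n + 1) / 2) (n - q), X p))
    * ((∏ p ∈ Finset.Icc ((n + 1) / 2) (n - q), (1 - X p ^ 2) * chebU (κ - 1) (X p))
        / (∏ p ∈ Finset.Icc q ((n - 1) / 2), (1 - X p ^ 2) * chebU (κ - 1) (X p)))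

namespace Polynomial.Chebyshev

variable (R : Type*) [CommRing R]

/-- Product formula `2 T_k U_m = U_{m+k} + U_{m-k}`. -/
theorem mul_T_U' (m k : ℤ) : 2 * T R k * U R m = U R (m + k) + U R (m - k) := by
  induction k using Polynomial.Chebyshev.induct with
  | zero => simp [two_mul]
  | one =>
    rw [T_one]
    linear_combination (norm := ring_nf) -(U_add_one R m)
  | add_two k ih1 ih2 =>
    have h₁ := U_add_two R (m + k)
    have h₂ := U_sub_two R (m - k)
    have h₃ := T_add_two R k
    linear_combination (norm := ring_nf) 2 * U R m * h₃ - h₂ - h₁ - ih2 + 2 * (X : R[X]) * ih1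
  | neg_add_one k ih1 ih2 =>
    have h₁ := U_add_two R (m + (-k - 1))
    have h₂ := U_sub_two R (m - (-k - 1))
    have h₃ := T_add_two R (-k - 1)
    linear_combination (norm := ring_nf) 2 * U R m * h₃ - h₂ - h₁ - ih2 + 2 * (X : R[X]) * ih1

/-- `U_{ab-1} = (U_{a-1} ∘ T_b) ⬝ U_{b-1}`. -/
theorem U_natmul (a : ℕ) (b : ℤ) :
    U R (a * b - 1) = (U R ((a : ℤ) - 1)).comp (T R b) * U R (b - 1) := by
  induction a using Nat.strong_induction_on with
  | _ a ih =>
    match a with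
    | 0 => simp [U_neg_one]
    | 1 => simp
    | (a + 2) =>
      have h0 := ih a (by omega)
      have h1 := ih (a + 1) (by omega)
      have h2 := mul_T_U' R ((a + 1 : ℕ) * b - 1) b
      have h3 : ((a + 1 : ℕ) : ℤ) * b - 1 + b = ((a + 2 : ℕ) : ℤ) * b - 1 := by push_cast; ring
      have h4 : ((a + 1 : ℕ) : ℤ) * b - 1 - b = (a : ℤ) * b - 1 := by push_cast; ring
      rw [h3, h4] at h2
      have h5 : U R ((a + 2 : ℕ) - 1) = 2 * X * U R ((a + 1 : ℕ) - 1) - U R ((a : ℤ) - 1) := by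
        have := U_add_two R ((a : ℤ) - 1)
        push_cast
        push_cast at this
        convert this using 2 <;> ring_nf
      have h6 := congr_arg (comp · (T R b)) h5
      simp only [sub_comp, mul_comp, ofNat_comp, X_comp] at h6
      push_cast at h2 h0 h1 h6 ⊢
      linear_combination (norm := ring_nf) -h2 + (2 * T R b) * h1 - h0 - U R (b - 1) * h6

end Polynomial.Chebyshev

/-- Evaluation form of the multiplication formula. -/
lemma chebU_mul_eval (j κ : ℕ) (hj : 1 ≤ j) (hκ : 1 ≤ κ) (x : ℝ) :
    chebU (j * κ - 1) x
      = (Polynomial.Chebyshev.U ℝ ((j : ℤ) - 1)).eval (chebT κ x) * chebU (κ - 1) x := by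
  have hjk : 1 ≤ j * κ := Nat.one_le_iff_ne_zero.mpr (Nat.mul_ne_zero (by omega) (by omega))
  have h1 : ((j * κ - 1 : ℕ) : ℤ) = (j : ℤ) * (κ : ℤ) - 1 := by
    push_cast [Nat.cast_sub hjk]; ring
  have h2 : ((κ - 1 : ℕ) : ℤ) = (κ : ℤ) - 1 := by push_cast [Nat.cast_sub hκ]; ring
  simp only [chebU, chebT, h1, h2]
  rw [Polynomial.Chebyshev.U_natmul ℝ j (κ : ℤ)]
  simp [Polynomial.eval_comp]

/-- Bottom-peeling for products over `Icc`. -/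
lemma prod_Icc_bot (f : ℕ → ℝ) {a b : ℕ} (h : a ≤ b) :
    ∏ p ∈ Finset.Icc a b, f p = f a * ∏ p ∈ Finset.Icc (a + 1) b, f p := by
  have : Finset.Icc a b = insert a (Finset.Icc (a + 1) b) := by
    ext x; simp only [Finset.mem_Icc, Finset.mem_insert]; omega
  rw [this, Finset.prod_insert (by simp)]

/-- If `x = cos (l π / κ)` then `(1 - x²) U_{κ-1}(x) = 0`. -/
lemma F_vanish (κ l : ℕ) (hκ : 1 ≤ κ) :
    (1 - Real.cos (l * π / κ) ^ 2) * chebU (κ - 1) (Real.cos (l * π / κ)) = 0 := by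
  have hκ0 : (κ : ℝ) ≠ 0 := by positivity
  set θ : ℝ := l * π / κ with hθ
  have h2 : ((κ - 1 : ℕ) : ℤ) = (κ : ℤ) - 1 := by push_cast [Nat.cast_sub hκ]; ring
  have hU : chebU (κ - 1) (Real.cos θ) * Real.sin θ = Real.sin (κ * θ) := by
    simp only [chebU, h2]
    rw [Polynomial.Chebyshev.U_real_cos θ ((κ : ℤ) - 1)]
    norm_num
  have hs : Real.sin ((κ : ℝ) * θ) = 0 := by
    have : (κ : ℝ) * θ = l * π := by rw [hθ]; field_simp
    rw [this, Real.sin_nat_mul_pi]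
  rw [hs] at hU
  have hsq : 1 - Real.cos θ ^ 2 = Real.sin θ ^ 2 := by
    have := Real.sin_sq_add_cos_sq θ; linarith
  rw [hsq]
  have : Real.sin θ ^ 2 * chebU (κ - 1) (Real.cos θ)
      = Real.sin θ * (chebU (κ - 1) (Real.cos θ) * Real.sin θ) := by ring
  rw [this, hU, mul_zero]

/-- If `E > 0` and `X₀,…,X_{n+1}` solve the odd system, then
`g_{jκ}^E(X_{(n+1)/2}) = Σ_{q=0}^{(n-1)/2} ω_q g_{jκ}^E(X_q)` for every `j ≥ 1`,
with coefficients `ω_q` independent of `j`. -/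
theorem omega_representation_odd (κ n : ℕ) (hκ : 4 ≤ κ) (hke : Even κ)
    (hn : 1 ≤ n) (hno : Odd n) (E : ℝ) (hE : 0 < E) (X : ℕ → ℝ)
    (hT : ∀ q ≤ (n - 1) / 2, chebT κ (X q) = chebT κ (X (n - q)))
    (hP : ∀ q ≤ (n + 1) / 2, X q * X (n + 1 - q) = E)
    (hX : ∀ q ≤ (n - 1) / 2, (-1 < X q ∧ X q < 1 ∧ X q ≠ 0) ∧ chebU (κ - 1) (X q) ≠ 0)
    (hlast : (∃ l : ℕ, l ≤ κ ∧ X (n + 1) = Real.cos (l * π / κ)) ∧ X (n + 1) ≠ 0) :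
    ∀ j : ℕ, 1 ≤ j →
      g j κ E (X ((n + 1) / 2)) =
        ∑ q ∈ Finset.range ((n + 1) / 2), omegaOdd κ n X q * g j κ E (X q) := by
  intro j hj
  obtain ⟨k, hk⟩ := hno
  have hk' : n = 2 * k + 1 := by omega
  subst hk'
  have he1 : (2 * k + 1 - 1) / 2 = k := by omega
  have he2 : (2 * k + 1 + 1) / 2 = k + 1 := by omega
  rw [he1] at hT hX
  rw [he2] at hP
  rw [he2]
  -- abbreviations
  set F : ℕ → ℝ := fun p => (1 - X p ^ 2) * chebU (κ - 1) (X p) with hF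
  set u : ℕ → ℝ := fun q => (Polynomial.Chebyshev.U ℝ ((j : ℤ) - 1)).eval (chebT κ (X q))
    with hu
  set ω : ℕ → ℝ := fun q => omegaOdd κ (2 * k + 1) X q with hω
  -- basic nonvanishing facts
  have hXlow : ∀ q ≤ k, X q ≠ 0 := fun q hq => (hX q hq).1.2.2
  have hFlow : ∀ q ≤ k, F q ≠ 0 := by
    intro q hq
    obtain ⟨⟨h1, h2, _⟩, h4⟩ := hX q hq
    have : 1 - X q ^ 2 ≠ 0 := by nlinarith
    exact mul_ne_zero this h4
  have hPk1 : X (k + 1) * X (k + 1) = E := by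
    have := hP (k + 1) le_rfl
    have hi : 2 * k + 1 + 1 - (k + 1) = k + 1 := by omega
    rwa [hi] at this
  have hXk1 : X (k + 1) ≠ 0 := by
    intro h; rw [h, mul_zero] at hPk1; exact hE.ne' hPk1.symm
  have hXhigh : ∀ p, k + 1 ≤ p → p ≤ 2 * k + 2 → X p ≠ 0 := by
    intro p hp1 hp2
    have hq : 2 * k + 2 - p ≤ k + 1 := by omega
    have := hP (2 * k + 2 - p) hq
    have hi : 2 * k + 1 + 1 - (2 * k + 2 - p) = p := by omega
    rw [hi] at this
    intro h; rw [h, mul_zero] at this; exact hE.ne' this.symm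
  have hXne : ∀ p ≤ 2 * k + 2, X p ≠ 0 := by
    intro p hp
    rcases le_or_gt p k with h | h
    · exact hXlow p h
    · exact hXhigh p (by omega) hp
  -- the expansion of g
  have hgx : ∀ x : ℝ, g j κ E x =
      (E / x) * ((1 - x ^ 2) * chebU (κ - 1) x)
          * (Polynomial.Chebyshev.U ℝ ((j : ℤ) - 1)).eval (chebT κ x)
        + x * ((1 - (E / x) ^ 2) * chebU (κ - 1) (E / x))
          * (Polynomial.Chebyshev.U ℝ ((j : ℤ) - 1)).eval (chebT κ (E / x)) := by
    intro x
    rw [g, chebU_mul_eval j κ hj (by omega) x, chebU_mul_eval j κ hj (by omega) (E / x)]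
    ring
  -- E / X q = X (2k+2-q) for q ≤ k+1
  have hdiv : ∀ q ≤ k + 1, E / X q = X (2 * k + 2 - q) := by
    intro q hq
    have h1 := hP q hq
    have hi : 2 * k + 1 + 1 - q = 2 * k + 2 - q := by omega
    rw [hi] at h1
    have hx0 : X q ≠ 0 := hXne q (by omega)
    field_simp [hx0]
    linarith [h1]
  -- values of g at the points
  have hg0 : g j κ E (X 0) = X (2 * k + 2) * F 0 * u 0 := by
    have h0 := hgx (X 0)
    rw [hdiv 0 (by omega)] at h0
    simp only [Nat.sub_zero] at h0
    obtain ⟨⟨l, hl, hXl⟩, _⟩ := hlast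
    have hvan : (1 - X (2 * k + 2) ^ 2) * chebU (κ - 1) (X (2 * k + 2)) = 0 := by
      have : X (2 * k + 1 + 1) = X (2 * k + 2) := rfl
      rw [← this, hXl]
      exact F_vanish κ l (by omega)
    rw [hvan] at h0
    rw [h0, hF, hu]
    ring
  have hgq : ∀ q, 1 ≤ q → q ≤ k →
      g j κ E (X q) = X (2 * k + 2 - q) * F q * u q + X q * F (2 * k + 2 - q) * u (q - 1) := by
    intro q hq1 hq2
    have h0 := hgx (X q)
    rw [hdiv q (by omega)] at h0
    have hTq : chebT κ (X (q - 1)) = chebT κ (X (2 * k + 2 - q)) := by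
      have := hT (q - 1) (by omega)
      have hi : 2 * k + 1 - (q - 1) = 2 * k + 2 - q := by omega
      rwa [hi] at this
    rw [h0]
    simp only [hF, hu]
    rw [← hTq]
    try ring
  have hgk1 : g j κ E (X (k + 1)) = 2 * X (k + 1) * F (k + 1) * u k := by
    have h0 := hgx (X (k + 1))
    rw [hdiv (k + 1) le_rfl] at h0
    have hi : 2 * k + 2 - (k + 1) = k + 1 := by omega
    rw [hi] at h0
    have hTk : chebT κ (X k) = chebT κ (X (k + 1)) := by
      have := hT k le_rfl
      have hi2 : 2 * k + 1 - k = k + 1 := by omega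
      rwa [hi2] at this
    rw [h0]
    simp only [hF, hu]
    rw [← hTk]
    try ring
  -- unfolded form of ω
  have hωq : ∀ q ≤ k, ω q = 2 * (-1 : ℝ) ^ (k - q)
      * ((∏ p ∈ Finset.Icc q k, X p) / (∏ p ∈ Finset.Icc (k + 1) (2 * k + 1 - q), X p))
      * ((∏ p ∈ Finset.Icc (k + 1) (2 * k + 1 - q), F p) / (∏ p ∈ Finset.Icc q k, F p)) := by
    intro q hq
    simp only [hω, omegaOdd, he1, he2, hF]
  -- nonvanishing of the denominators
  have hQ1 : ∀ q ≤ k, (∏ p ∈ Finset.Icc q k, F p) ≠ 0 := by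
    intro q hq
    exact Finset.prod_ne_zero_iff.mpr (fun p hp => hFlow p (Finset.mem_Icc.mp hp).2)
  have hP2 : ∀ a b, k + 1 ≤ a → b ≤ 2 * k + 2 → (∏ p ∈ Finset.Icc a b, X p) ≠ 0 := by
    intro a b ha hb
    refine Finset.prod_ne_zero_iff.mpr (fun p hp => ?_)
    have := Finset.mem_Icc.mp hp
    exact hXne p (by omega)
  -- the cancellation identity
  have hcancel : ∀ q, q < k →
      ω q * (X (2 * k + 2 - q) * F q) + ω (q + 1) * (X (q + 1) * F (2 * k + 1 - q)) = 0 := by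
    intro q hq
    rw [hωq q (by omega), hωq (q + 1) (by omega)]
    -- peel products
    rw [prod_Icc_bot X (show q ≤ k by omega), prod_Icc_bot F (show q ≤ k by omega)]
    have hsplit : 2 * k + 1 - q = (2 * k - q) + 1 := by omega
    rw [hsplit, Finset.prod_Icc_succ_top (show k + 1 ≤ 2 * k - q + 1 by omega) X,
      Finset.prod_Icc_succ_top (show k + 1 ≤ 2 * k - q + 1 by omega) F]
    have hsplit2 : 2 * k + 1 - (q + 1) = 2 * k - q := by omega
    rw [hsplit2]
    have hpow : (-1 : ℝ) ^ (k - q) = -(-1 : ℝ) ^ (k - (q + 1)) := by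
      rw [show k - q = (k - (q + 1)) + 1 by omega, pow_succ]; ring
    rw [hpow]
    -- the key relation
    have h1 := hP q (by omega)
    have h2 := hP (q + 1) (by omega)
    have hi1 : 2 * k + 1 + 1 - q = 2 * k + 2 - q := by omega
    have hi2 : 2 * k + 1 + 1 - (q + 1) = 2 * k - q + 1 := by omega
    rw [hi1] at h1
    rw [hi2] at h2
    have hXq : X q ≠ 0 := hXlow q (by omega)
    have hXtop : X (2 * k - q + 1) ≠ 0 := hXne _ (by omega)
    have hsub : X (2 * k + 2 - q) = X (q + 1) * X (2 * k - q + 1) / X q := by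
      rw [eq_div_iff hXq]
      linear_combination h1 - h2
    rw [hsub]
    have hFq : F q ≠ 0 := hFlow q (by omega)
    have hQ1' : (∏ p ∈ Finset.Icc (q + 1) k, F p) ≠ 0 := hQ1 (q + 1) (by omega)
    have hP2' : (∏ p ∈ Finset.Icc (k + 1) (2 * k - q), X p) ≠ 0 :=
      hP2 (k + 1) (2 * k - q) le_rfl (by omega)
    field_simp
    ring
  -- the top coefficient
  have hfinal : ω k * (X (k + 2) * F k) = 2 * X (k + 1) * F (k + 1) := by
    rw [hωq k le_rfl]
    have hi : 2 * k + 1 - k = k + 1 := by omega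
    rw [hi]
    simp only [Finset.Icc_self, Finset.prod_singleton, Nat.sub_self, pow_zero]
    have h1 := hP k (by omega)
    have hi1 : 2 * k + 1 + 1 - k = k + 2 := by omega
    rw [hi1] at h1
    have hXq : X k ≠ 0 := hXlow k le_rfl
    have hFq : F k ≠ 0 := hFlow k le_rfl
    have hsub : X (k + 2) = X (k + 1) * X (k + 1) / X k := by
      rw [eq_div_iff hXq]
      linear_combination h1 - hPk1
    rw [hsub]
    field_simp
  -- the telescoping sum
  have key : ∀ r ≤ k, ∑ q ∈ Finset.range (r + 1), ω q * g j κ E (X q)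
      = ω r * (X (2 * k + 2 - r) * F r) * u r := by
    intro r
    induction r with
    | zero =>
      intro _
      rw [Finset.sum_range_one, hg0]
      simp only [Nat.sub_zero]
      ring
    | succ r ih =>
      intro hr
      rw [Finset.sum_range_succ, ih (by omega), hgq (r + 1) (by omega) (by omega)]
      have hi : 2 * k + 2 - (r + 1) = 2 * k + 1 - r := by omega
      have hi2 : r + 1 - 1 = r := by omega
      rw [hi, hi2]
      have hc := hcancel r (by omega)
      have hi3 : 2 * k + 2 - r = 2 * k + 2 - r := rfl
      linear_combination u r * hc
  -- conclusion
  rw [show (∑ q ∈ Finset.range (k + 1), omegaOdd κ (2 * k + 1) X q * g j κ E (X q))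
      = ∑ q ∈ Finset.range (k + 1), ω q * g j κ E (X q) from rfl]
  rw [key k le_rfl]
  have hik : 2 * k + 2 - k = k + 2 := by omega
  rw [hik, hgk1]
  linear_combination u k * hfinal.symm
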